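/- The interval domain $I\overline{\mathbb{R}}_+$ of closed intervals $[a,b]$ with $0 \le a \le b \le +\infty$, ordered by reverse inclusion, with addition $[a,b]+[c,d]=[a+c,b+d]$ and multiplication $[a,b]\times[c,d]=[a\cdot_\ell c, b\cdot_r d]$, is an Abelian d-rag: $(R,0,+)$ with $0=[0,0]$ is an Abelian monoid, $(R,1,\times)$ with $1=[1,1]$ is an Abelian monoid, $\times$ distributes over $+$, and both operations are Scott-continuous. -/

import Mathlib

open scoped ENNReal

noncomputable section

/-- The "left" product on `ℝ≥0∞`: the ordinary product, with `0 ⬝ ∞ = ∞ ⬝ 0 = 0`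
(this is exactly `ENNReal` multiplication). -/
def mulL (a b : ℝ≥0∞) : ℝ≥0∞ := a * b

/-- The "right" product on `ℝ≥0∞`: the ordinary product, except `0 ⬝ ∞ = ∞ ⬝ 0 = ∞`. -/
def mulR (a b : ℝ≥0∞) : ℝ≥0∞ :=
  if (a = 0 ∧ b = ⊤) ∨ (a = ⊤ ∧ b = 0) then ⊤ else a * b

/-- The interval domain `I ℝ≥0∞` of intervals `[a, b]` with `0 ≤ a ≤ b ≤ ∞`. -/
def IRp : Type := {p : ℝ≥0∞ × ℝ≥0∞ // p.1 ≤ p.2}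

namespace IRp

/-- Reverse inclusion ordering: `[a,b] ≤ [c,d]` iff `[c,d] ⊆ [a,b]`, i.e. `a ≤ c` and `d ≤ b`. -/
instance : PartialOrder IRp where
  le x y := x.1.1 ≤ y.1.1 ∧ y.1.2 ≤ x.1.2
  le_refl x := ⟨le_rfl, le_rfl⟩
  le_trans x y z h h' := ⟨h.1.trans h'.1, h'.2.trans h.2⟩
  le_antisymm x y h h' :=
    Subtype.ext (Prod.ext (le_antisymm h.1 h'.1) (le_antisymm h'.2 h.2))

/-- Addition: `[a,b] + [c,d] = [a+c, b+d]`. -/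
def add (x y : IRp) : IRp := ⟨(x.1.1 + y.1.1, x.1.2 + y.1.2), add_le_add x.2 y.2⟩

/-- The additive unit `[0,0]`. -/
def zero : IRp := ⟨(0, 0), le_rfl⟩

/-- The multiplicative unit `[1,1]`. -/
def one : IRp := ⟨(1, 1), le_rfl⟩

/-- Multiplication: `[a,b] × [c,d] = [a ⬝ₗ c, b ⬝ᵣ d]`. -/
def mul (x y : IRp) : IRp :=
  ⟨(mulL x.1.1 y.1.1, mulR x.1.2 y.1.2), by
    unfold mulL mulR
    split
    · exact le_top
    · exact mul_le_mul' x.2 y.2⟩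

end IRp

/-! ### Auxiliary lemmas -/

lemma mulR_def (a b : ℝ≥0∞) : mulR a b = if a = ⊤ ∨ b = ⊤ then ⊤ else a * b := by
  unfold mulR
  rcases eq_or_ne a ⊤ with rfl | ha
  · rcases eq_or_ne b 0 with rfl | hb
    · simp
    · simp [ENNReal.top_mul hb]
  · rcases eq_or_ne b ⊤ with rfl | hb
    · rcases eq_or_ne a 0 with rfl | ha0
      · simp
      · simp [ha, ha0, ENNReal.mul_top ha0]
    · simp [ha, hb]

lemma mulR_comm (a b : ℝ≥0∞) : mulR a b = mulR b a := by
  rw [mulR_def, mulR_def, mul_comm]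
  exact if_congr or_comm rfl rfl

lemma mulR_one (a : ℝ≥0∞) : mulR a 1 = a := by
  rcases eq_or_ne a ⊤ with rfl | ha
  · simp [mulR_def]
  · simp [mulR_def, ha]

lemma mulR_assoc (a b c : ℝ≥0∞) : mulR (mulR a b) c = mulR a (mulR b c) := by
  rcases eq_or_ne a ⊤ with rfl | ha
  · simp [mulR_def]
  rcases eq_or_ne b ⊤ with rfl | hb
  · simp [mulR_def, ha]
  rcases eq_or_ne c ⊤ with rfl | hc
  · simp [mulR_def, ha, hb, ENNReal.mul_eq_top]
  · simp [mulR_def, ha, hb, hc, ENNReal.mul_eq_top, mul_assoc]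

lemma mulR_add (a b c : ℝ≥0∞) : mulR a (b + c) = mulR a b + mulR a c := by
  rcases eq_or_ne a ⊤ with rfl | ha
  · simp [mulR_def]
  rcases eq_or_ne b ⊤ with rfl | hb
  · simp [mulR_def, ha]
  rcases eq_or_ne c ⊤ with rfl | hc
  · simp [mulR_def, ha, hb]
  · simp [mulR_def, ha, hb, hc, ENNReal.add_eq_top, mul_add]

lemma mulR_mono (a : ℝ≥0∞) {b c : ℝ≥0∞} (h : b ≤ c) : mulR a b ≤ mulR a c := by
  rcases eq_or_ne a ⊤ with rfl | ha
  · simp [mulR_def]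
  rcases eq_or_ne c ⊤ with rfl | hc
  · simp [mulR_def]
  have hb : b ≠ ⊤ := fun hbt => hc (top_le_iff.1 (hbt ▸ h))
  simpa [mulR_def, ha, hb, hc] using mul_le_mul' (le_refl a) h

lemma mulR_eq_mul {a : ℝ≥0∞} (ha0 : a ≠ 0) (ha : a ≠ ⊤) (b : ℝ≥0∞) : mulR a b = a * b := by
  rcases eq_or_ne b ⊤ with rfl | hb
  · simp [mulR_def, ENNReal.mul_top ha0]
  · simp [mulR_def, ha, hb]

lemma mulR_iInf (a : ℝ≥0∞) {ι : Sort*} [Nonempty ι] (f : ι → ℝ≥0∞) :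
    mulR a (⨅ i, f i) = ⨅ i, mulR a (f i) := by
  rcases eq_or_ne a ⊤ with rfl | ha
  · simp [mulR_def]
  rcases eq_or_ne a 0 with rfl | ha0
  · by_cases h : ∀ i, f i = ⊤
    · have h1 : ⨅ i, f i = ⊤ := iInf_eq_top.2 h
      simp [mulR_def, h1, h]
    · push_neg at h
      obtain ⟨i, hi⟩ := h
      have h1 : (⨅ i, f i) ≠ ⊤ := fun ht => hi (iInf_eq_top.1 ht i)
      have h2 : (⨅ i, mulR 0 (f i)) = 0 :=
        le_antisymm (iInf_le_of_le i (by simp [mulR_def, hi])) zero_le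
      rw [h2]
      simp [mulR_def, h1]
  · simp only [mulR_eq_mul ha0 ha]
    exact ENNReal.mul_iInf_of_ne ha0 ha

namespace IRp

lemma le_def {x y : IRp} : x ≤ y ↔ x.1.1 ≤ y.1.1 ∧ y.1.2 ≤ x.1.2 := Iff.rfl

lemma add_mono (a : IRp) {x y : IRp} (h : x ≤ y) : add a x ≤ add a y :=
  ⟨add_le_add le_rfl h.1, add_le_add le_rfl h.2⟩

lemma mul_mono (a : IRp) {x y : IRp} (h : x ≤ y) : mul a x ≤ mul a y :=
  ⟨mul_le_mul' le_rfl h.1, mulR_mono _ h.2⟩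

/-- The explicit least upper bound of a directed set. -/
def lub (D : Set IRp) (hdir : DirectedOn (· ≤ ·) D) : IRp :=
  ⟨(⨆ x : D, (x : IRp).1.1, ⨅ x : D, (x : IRp).1.2), by
    refine iSup_le fun x => le_iInf fun y => ?_
    obtain ⟨z, hz, hxz, hyz⟩ := hdir x x.2 y y.2
    exact (hxz.1.trans z.2).trans hyz.2⟩

lemma isLUB_lub {D : Set IRp} (hdir : DirectedOn (· ≤ ·) D) : IsLUB D (lub D hdir) := by
  constructor
  · intro x hx
    exact ⟨le_iSup (fun y : D => (y : IRp).1.1) ⟨x, hx⟩,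
      iInf_le (fun y : D => (y : IRp).1.2) ⟨x, hx⟩⟩
  · intro u hu
    exact ⟨iSup_le fun x => (hu x.2).1, le_iInf fun x => (hu x.2).2⟩

end IRp

/-- `I ℝ≥0∞` is an Abelian d-rag: `([0,0], +)` is an Abelian monoid, `([1,1], ×)` is an
Abelian monoid, `×` distributes over `+`, every nonempty directed set has a least upper
bound (dcpo), and `+` and `×` are Scott-continuous (in each argument; by commutativity
this gives Scott-continuity in both). -/
theorem IRp_isAbelianDRag :
    (∀ x y : IRp, IRp.add x y = IRp.add y x) ∧
    (∀ x y z : IRp, IRp.add (IRp.add x y) z = IRp.add x (IRp.add y z)) ∧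
    (∀ x : IRp, IRp.add x IRp.zero = x) ∧
    (∀ x y : IRp, IRp.mul x y = IRp.mul y x) ∧
    (∀ x y z : IRp, IRp.mul (IRp.mul x y) z = IRp.mul x (IRp.mul y z)) ∧
    (∀ x : IRp, IRp.mul x IRp.one = x) ∧
    (∀ x y z : IRp, IRp.mul x (IRp.add y z) = IRp.add (IRp.mul x y) (IRp.mul x z)) ∧
    (∀ D : Set IRp, D.Nonempty → DirectedOn (· ≤ ·) D → ∃ s, IsLUB D s) ∧
    (∀ a : IRp, ScottContinuous (IRp.add a)) ∧
    (∀ a : IRp, ScottContinuous (IRp.mul a)) := by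
  refine ⟨?_, ?_, ?_, ?_, ?_, ?_, ?_, ?_, ?_, ?_⟩
  · exact fun x y => Subtype.ext (Prod.ext (add_comm _ _) (add_comm _ _))
  · exact fun x y z => Subtype.ext (Prod.ext (add_assoc _ _ _) (add_assoc _ _ _))
  · exact fun x => Subtype.ext (Prod.ext (add_zero _) (add_zero _))
  · exact fun x y => Subtype.ext (Prod.ext (mul_comm _ _) (mulR_comm _ _))
  · exact fun x y z => Subtype.ext (Prod.ext (mul_assoc _ _ _) (mulR_assoc _ _ _))
  · exact fun x => Subtype.ext (Prod.ext (mul_one _) (mulR_one _))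
  · exact fun x y z => Subtype.ext (Prod.ext (mul_add _ _ _) (mulR_add _ _ _))
  · exact fun D _ hdir => ⟨IRp.lub D hdir, IRp.isLUB_lub hdir⟩
  · intro a D hD hdir s hs
    haveI : Nonempty D := hD.to_subtype
    obtain rfl : s = IRp.lub D hdir := hs.unique (IRp.isLUB_lub hdir)
    constructor
    · rintro y ⟨x, hx, rfl⟩
      exact IRp.add_mono a ((IRp.isLUB_lub hdir).1 hx)
    · intro u hu
      refine ⟨?_, ?_⟩
      · show a.1.1 + ⨆ x : D, (x : IRp).1.1 ≤ u.1.1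
        rw [ENNReal.add_iSup]
        exact iSup_le fun x => (hu (Set.mem_image_of_mem _ x.2)).1
      · show u.1.2 ≤ a.1.2 + ⨅ x : D, (x : IRp).1.2
        rw [ENNReal.add_iInf]
        exact le_iInf fun x => (hu (Set.mem_image_of_mem _ x.2)).2
  · intro a D hD hdir s hs
    haveI : Nonempty D := hD.to_subtype
    obtain rfl : s = IRp.lub D hdir := hs.unique (IRp.isLUB_lub hdir)
    constructor
    · rintro y ⟨x, hx, rfl⟩
      exact IRp.mul_mono a ((IRp.isLUB_lub hdir).1 hx)
    · intro u hu
      refine ⟨?_, ?_⟩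
      · show mulL a.1.1 (⨆ x : D, (x : IRp).1.1) ≤ u.1.1
        unfold mulL
        rw [ENNReal.mul_iSup]
        exact iSup_le fun x => (hu (Set.mem_image_of_mem _ x.2)).1
      · show u.1.2 ≤ mulR a.1.2 (⨅ x : D, (x : IRp).1.2)
        rw [mulR_iInf]
        exact le_iInf fun x => (hu (Set.mem_image_of_mem _ x.2)).2
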